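/- Under the singleton-menu construction where supplier j is shown alone to x_j customers (∑_j x_j = m, v_j ≥ 1 for all j, supplier outside options q_j ≥ 0), the expected number of matches satisfies ∑_j E[Y_j] ≥ (1/4)(1 - e^{-1/24})·∑_j x_j/(x_j+q_j), where Y_j is the indicator that supplier j matches and, conditional on X_j customers choosing j, P(Y_j = 1 | X_j) = X_j/(X_j+q_j). -/

import Mathlib

open MeasureTheory ProbabilityTheory

/-- Singleton-menu guarantee: supplier `j` (value `v j ≥ 1`, outside option `q j ≥ 0`)
    is shown alone to `x j` customers, `∑ j, x j = m`; `X j = ∑ i, B j i` counts the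
    customers choosing `j` (independent Bernoulli(`v j/(v j+1)`) choices), and `Y j` is
    the indicator that supplier `j` matches, with `E[Y j] = E[X j/(X j + q j)]`.
    Then `∑ j, E[Y j] ≥ (1/4)(1 - e^{-1/24}) · ∑ j, x j/(x j + q j)`. -/
theorem singleton_menu_matches {Ω : Type*} [MeasurableSpace Ω]
    (μ : Measure Ω) [IsProbabilityMeasure μ]
    (n m : ℕ) (v : Fin n → ℝ) (hv : ∀ j, 1 ≤ v j)
    (q : Fin n → ℝ) (hq : ∀ j, 0 ≤ q j)
    (x : Fin n → ℕ) (hx : ∑ j, x j = m) (hx1 : ∀ j, 1 ≤ x j)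
    (B : ∀ j : Fin n, Fin (x j) → Ω → ℕ)
    (hmeas : ∀ j i, Measurable (B j i))
    (hber : ∀ j i ω, B j i ω ≤ 1)
    (hp : ∀ j i, (μ {ω | B j i ω = 1}).toReal = v j / (v j + 1))
    (hind : ∀ j, iIndepFun (B j) μ)
    (Y : Fin n → Ω → ℕ)
    (hYber : ∀ j ω, Y j ω ≤ 1)
    (hY : ∀ j, (μ {ω | Y j ω = 1}).toReal =
      ∫ ω, ((∑ i, B j i ω : ℕ) : ℝ) / (((∑ i, B j i ω : ℕ) : ℝ) + q j) ∂μ) :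
    (1 / 4) * (1 - Real.exp (-(1 / 24))) * ∑ j, (x j : ℝ) / ((x j : ℝ) + q j) ≤
      ∑ j, (μ {ω | Y j ω = 1}).toReal := by
  have hc : (1 / 4 : ℝ) * (1 - Real.exp (-(1 / 24))) ≤ 1 / 2 := by
    have := Real.exp_pos (-(1 / 24 : ℝ))
    nlinarith
  have key : ∀ j, (1 / 4 : ℝ) * (1 - Real.exp (-(1 / 24))) *
      ((x j : ℝ) / ((x j : ℝ) + q j)) ≤ (μ {ω | Y j ω = 1}).toReal := by
    intro j
    rw [hY j]
    set X : Ω → ℕ := fun ω => ∑ i, B j i ω with hXdef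
    have hXmeas : Measurable X := Finset.measurable_sum _ (fun i _ => hmeas j i)
    have hXle : ∀ ω, (X ω : ℝ) ≤ (x j : ℝ) := by
      intro ω
      have : X ω ≤ ∑ _i : Fin (x j), 1 :=
        Finset.sum_le_sum (fun i _ => hber j i ω)
      simpa using (Nat.cast_le.mpr this : (X ω : ℝ) ≤ _)
    have hq0 := hq j
    have hx0 : (1 : ℝ) ≤ (x j : ℝ) := by exact_mod_cast hx1 j
    have hxq : (0 : ℝ) < (x j : ℝ) + q j := by linarith
    -- measurability of the integrands
    have hgmeas : Measurable (fun ω => (X ω : ℝ) / ((X ω : ℝ) + q j)) := by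
      exact (measurable_from_top (f := fun k : ℕ => (k : ℝ) / ((k : ℝ) + q j))).comp hXmeas
    have hfmeas : Measurable (fun ω => (X ω : ℝ)) :=
      (measurable_from_top (f := fun k : ℕ => (k : ℝ))).comp hXmeas
    -- bounds on the integrands
    have hgbound : ∀ ω, (X ω : ℝ) / ((X ω : ℝ) + q j) ≤ 1 := by
      intro ω
      rcases Nat.eq_zero_or_pos (X ω) with h0 | hpos
      · simp [h0]
      · have h1 : (1 : ℝ) ≤ (X ω : ℝ) := by exact_mod_cast hpos
        rw [div_le_one (by linarith)]; linarith
    have hgnn : ∀ ω, 0 ≤ (X ω : ℝ) / ((X ω : ℝ) + q j) := by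
      intro ω
      rcases Nat.eq_zero_or_pos (X ω) with h0 | hpos
      · simp [h0]
      · have h1 : (1 : ℝ) ≤ (X ω : ℝ) := by exact_mod_cast hpos
        positivity
    have hint1 : Integrable (fun ω => (X ω : ℝ) / ((X ω : ℝ) + q j)) μ := by
      refine (integrable_const (1 : ℝ)).mono' hgmeas.aestronglyMeasurable ?_
      filter_upwards with ω
      rw [Real.norm_eq_abs, abs_of_nonneg (hgnn ω)]
      exact hgbound ω
    have hint2 : Integrable (fun ω => (X ω : ℝ)) μ := by
      refine (integrable_const ((x j : ℝ))).mono' hfmeas.aestronglyMeasurable ?_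
      filter_upwards with ω
      rw [Real.norm_eq_abs, abs_of_nonneg (by positivity)]
      exact hXle ω
    -- pointwise comparison
    have hmono : ∀ ω, (X ω : ℝ) / ((x j : ℝ) + q j) ≤ (X ω : ℝ) / ((X ω : ℝ) + q j) := by
      intro ω
      rcases Nat.eq_zero_or_pos (X ω) with h0 | hpos
      · simp [h0]
      · have h1 : (1 : ℝ) ≤ (X ω : ℝ) := by exact_mod_cast hpos
        exact div_le_div_of_nonneg_left (by linarith) (by linarith) (by
          have := hXle ω; linarith)
    have step1 : ∫ ω, (X ω : ℝ) / ((x j : ℝ) + q j) ∂μ ≤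
        ∫ ω, (X ω : ℝ) / ((X ω : ℝ) + q j) ∂μ :=
      integral_mono (hint2.div_const _) hint1 hmono
    -- expectation of each Bernoulli
    have hEB : ∀ i, ∫ ω, (B j i ω : ℝ) ∂μ = v j / (v j + 1) := by
      intro i
      have heq : (fun ω => (B j i ω : ℝ)) =
          Set.indicator {ω | B j i ω = 1} (fun _ => (1 : ℝ)) := by
        funext ω
        simp only [Set.indicator_apply, Set.mem_setOf_eq]
        by_cases h : B j i ω = 1
        · simp [h]
        · have h0 : B j i ω = 0 := by have := hber j i ω; omega
          simp [h, h0]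
      have hs : MeasurableSet {ω | B j i ω = 1} := hmeas j i (measurableSet_singleton 1)
      rw [heq, integral_indicator_const _ hs, smul_eq_mul, mul_one]; exact hp j i
    have hintB : ∀ i : Fin (x j), Integrable (fun ω => (B j i ω : ℝ)) μ := by
      intro i
      refine (integrable_const (1 : ℝ)).mono'
        ((measurable_from_top (f := fun k : ℕ => (k : ℝ))).comp (hmeas j i)).aestronglyMeasurable ?_
      filter_upwards with ω
      rw [Real.norm_eq_abs, abs_of_nonneg (by positivity)]
      exact_mod_cast hber j i ω
    have hEX : ∫ ω, (X ω : ℝ) ∂μ = (x j : ℝ) * (v j / (v j + 1)) := by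
      have : (fun ω => (X ω : ℝ)) = fun ω => ∑ i, (B j i ω : ℝ) := by
        funext ω; simp [hXdef]
      rw [this, integral_finset_sum _ (fun i _ => hintB i)]
      simp [hEB]
    have step0 : (1 / 4 : ℝ) * (1 - Real.exp (-(1 / 24))) *
        ((x j : ℝ) / ((x j : ℝ) + q j)) ≤ ∫ ω, (X ω : ℝ) / ((x j : ℝ) + q j) ∂μ := by
      rw [integral_div, hEX]
      have hv1 := hv j
      have hp2 : (1 / 2 : ℝ) ≤ v j / (v j + 1) := by
        rw [le_div_iff₀ (by linarith)]; linarith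
      have hxqnn : 0 ≤ (x j : ℝ) / ((x j : ℝ) + q j) := by positivity
      calc (1 / 4 : ℝ) * (1 - Real.exp (-(1 / 24))) * ((x j : ℝ) / ((x j : ℝ) + q j))
          ≤ (1 / 2) * ((x j : ℝ) / ((x j : ℝ) + q j)) :=
            mul_le_mul_of_nonneg_right hc hxqnn
        _ ≤ (v j / (v j + 1)) * ((x j : ℝ) / ((x j : ℝ) + q j)) :=
            mul_le_mul_of_nonneg_right hp2 hxqnn
        _ = (x j : ℝ) * (v j / (v j + 1)) / ((x j : ℝ) + q j) := by ring
    exact le_trans step0 (le_trans step1 (le_of_eq rfl))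
  rw [Finset.mul_sum]
  exact Finset.sum_le_sum (fun j _ => key j)
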